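/- Let (T,r) be a spanning tree of a finite simple graph G rooted at r, and let {x,y} be an edge of G whose endpoints are incomparable in (T,r) (a cross edge). Let w be the deepest common ancestor of x and y in (T,r), and let v be the child of w that is an ancestor of y. Then the spanning subgraph obtained from T by removing the tree edge {w,v} and adding the edge {x,y} is again a spanning tree of G. -/

import Mathlib

/-- `u` lies on the unique path in `T` from `r` to `v`
(characterized in a tree via distances). -/
def IsAncestor {V : Type*} (T : SimpleGraph V) (r u v : V) : Prop :=
  T.dist r u + T.dist u v = T.dist r v

/-- `u` and `v` are comparable in the rooted tree `(T, r)`. -/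
def TreeComparable {V : Type*} (T : SimpleGraph V) (r u v : V) : Prop :=
  IsAncestor T r u v ∨ IsAncestor T r v u

open SimpleGraph

section Helpers

set_option linter.unusedSectionVars false

variable {V : Type*} [DecidableEq V] {T : SimpleGraph V}

/-- Splitting distances along a shortest walk. -/
lemma dist_split {a c u : V} (p : T.Walk a c) (hp : p.length = T.dist a c)
    (hu : u ∈ p.support) :
    T.dist a u + T.dist u c = T.dist a c ∧
      (p.takeUntil u hu).length = T.dist a u ∧
      (p.dropUntil u hu).length = T.dist u c := by
  have h3 := congrArg SimpleGraph.Walk.length (p.take_spec hu)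
  rw [SimpleGraph.Walk.length_append] at h3
  have h1 := T.dist_le (p.takeUntil u hu)
  have h2 := T.dist_le (p.dropUntil u hu)
  obtain ⟨q1, hq1⟩ := (p.takeUntil u hu).reachable.exists_walk_length_eq_dist
  obtain ⟨q2, hq2⟩ := (p.dropUntil u hu).reachable.exists_walk_length_eq_dist
  have h4 := T.dist_le (q1.append q2)
  rw [SimpleGraph.Walk.length_append, hq1, hq2] at h4
  refine ⟨by omega, by omega, by omega⟩

lemma anc_trans (hc : T.Connected) {r a b c : V}
    (h1 : IsAncestor T r a b) (h2 : IsAncestor T r b c) : IsAncestor T r a c := by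
  unfold IsAncestor at *
  have t1 : T.dist r c ≤ T.dist r a + T.dist a c := hc.dist_triangle
  have t2 : T.dist a c ≤ T.dist a b + T.dist b c := hc.dist_triangle
  omega

/-- An ancestor of `c` lies on any path from `r` to `c` in a tree. -/
lemma anc_mem (hT : T.IsTree) {r a c : V} (h : IsAncestor T r a c)
    (p : T.Walk r c) (hp : p.IsPath) : a ∈ p.support := by
  have hc := hT.isConnected
  obtain ⟨q1, hq1⟩ := hc.exists_walk_length_eq_dist r a
  obtain ⟨q2, hq2⟩ := hc.exists_walk_length_eq_dist a c
  have hlen : (q1.append q2).length = T.dist r c := by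
    rw [SimpleGraph.Walk.length_append, hq1, hq2]; exact h
  have hqp : (q1.append q2).IsPath := SimpleGraph.Walk.isPath_of_length_eq_dist _ hlen
  obtain ⟨p0, -, huniq⟩ := hT.existsUnique_path r c
  have e1 := huniq _ hqp
  have e2 := huniq _ hp
  have : q1.append q2 = p := e1.trans e2.symm
  rw [← this]
  exact (SimpleGraph.Walk.mem_support_append_iff _ _).mpr (Or.inl q1.end_mem_support)

/-- Of two ancestors of the same vertex, the shallower is an ancestor of the deeper. -/
lemma anc_compare (hT : T.IsTree) {r a b c : V} (ha : IsAncestor T r a c)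
    (hb : IsAncestor T r b c) (hle : T.dist r a ≤ T.dist r b) :
    IsAncestor T r a b := by
  have hc := hT.isConnected
  obtain ⟨p, hlen⟩ := hc.exists_walk_length_eq_dist r c
  have hp : p.IsPath := SimpleGraph.Walk.isPath_of_length_eq_dist _ hlen
  have ha' : a ∈ p.support := anc_mem hT ha p hp
  have hb' : b ∈ p.support := anc_mem hT hb p hp
  obtain ⟨hsum, htake, hdrop⟩ := dist_split p hlen hb'
  have hmem : a ∈ (p.takeUntil b hb').support ∨ a ∈ (p.dropUntil b hb').support := by
    rw [← SimpleGraph.Walk.mem_support_append_iff, p.take_spec hb']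
    exact ha'
  rcases hmem with hmem | hmem
  · exact (dist_split _ htake hmem).1
  · have h2 := (dist_split _ hdrop hmem).1
    unfold IsAncestor at *
    have hba : T.dist b a = 0 := by omega
    have : b = a := (hc.preconnected b a).dist_eq_zero_iff.mp hba
    subst this
    simp [SimpleGraph.dist_self]

/-- Adjacent vertices in a tree are comparable, with depths differing by one. -/
lemma adj_parent (hT : T.IsTree) {r a b : V} (hab : T.Adj a b) :
    (IsAncestor T r a b ∧ T.dist r a + 1 = T.dist r b) ∨
      (IsAncestor T r b a ∧ T.dist r b + 1 = T.dist r a) := by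
  have hc := hT.isConnected
  have hd : T.dist a b = 1 := SimpleGraph.dist_eq_one_iff_adj.mpr hab
  have hd' : T.dist b a = 1 := by rw [SimpleGraph.dist_comm]; exact hd
  have t1 : T.dist r b ≤ T.dist r a + T.dist a b := hc.dist_triangle
  have t2 : T.dist r a ≤ T.dist r b + T.dist b a := hc.dist_triangle
  have hne : T.dist r a ≠ T.dist r b := by
    intro heq
    obtain ⟨p, hlen⟩ := hc.exists_walk_length_eq_dist r a
    have hp : p.IsPath := SimpleGraph.Walk.isPath_of_length_eq_dist _ hlen
    by_cases hbmem : b ∈ p.support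
    · have := (dist_split p hlen hbmem).1
      omega
    · set q := (SimpleGraph.Walk.cons hab.symm p.reverse).reverse with hqdef
      have hqp : q.IsPath := by
        apply SimpleGraph.Walk.IsPath.reverse
        rw [SimpleGraph.Walk.cons_isPath_iff]
        exact ⟨hp.reverse, by simpa using hbmem⟩
      have hql : q.length = T.dist r a + 1 := by
        simp [hqdef, hlen]
      obtain ⟨p', hlen'⟩ := hc.exists_walk_length_eq_dist r b
      have hp' : p'.IsPath := SimpleGraph.Walk.isPath_of_length_eq_dist _ hlen'
      obtain ⟨p0, -, huniq⟩ := hT.existsUnique_path r b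
      have e1 := huniq _ hqp
      have e2 := huniq _ hp'
      have : q.length = p'.length := by rw [e1.trans e2.symm]
      omega
  unfold IsAncestor
  rcases Nat.lt_or_ge (T.dist r a) (T.dist r b) with h | h
  · left; omega
  · right; omega

/-- Any walk in the tree from a descendant of `v` to a non-descendant of `v`
uses the edge `{w, v}` from the parent `w` to `v`. -/
lemma boundary (hT : T.IsTree) {r w v : V} (hv : T.Adj w v)
    (hwv : IsAncestor T r w v) (hrv : T.dist r w + 1 = T.dist r v) :
    ∀ {a b : V} (p : T.Walk a b), IsAncestor T r v a → ¬ IsAncestor T r v b →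
      s(w, v) ∈ p.edges := by
  have hc := hT.isConnected
  intro a b p
  induction p with
  | nil => intro h1 h2; exact absurd h1 h2
  | @cons a m b hadj q ih =>
    intro h1 h2
    by_cases hDm : IsAncestor T r v m
    · exact List.mem_cons_of_mem _ (ih hDm h2)
    · rw [SimpleGraph.Walk.edges_cons]
      rcases adj_parent hT hadj with ⟨ham, hdm⟩ | ⟨hma, hdm⟩
      · exact absurd (anc_trans hc h1 ham) hDm
      · -- m is the parent of a
        by_cases hva : T.dist v a = 0
        · have hav : a = v := by
            have : v = a := (hc.preconnected v a).dist_eq_zero_iff.mp hva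
            exact this.symm
          rw [hav] at hdm hma
          -- m and w are both ancestors of a = v at the same depth
          have hdm' : T.dist r m = T.dist r w := by omega
          have hmw : IsAncestor T r m w := anc_compare hT hma hwv (le_of_eq hdm')
          have hmweq : m = w := by
            unfold IsAncestor at hmw
            have : T.dist m w = 0 := by omega
            exact (hc.preconnected m w).dist_eq_zero_iff.mp this
          have : s(a, m) = s(w, v) := by rw [hav, hmweq]; exact Sym2.eq_swap
          rw [this]
          exact List.mem_cons_self
        · -- v is an ancestor of m, contradiction
          have hle : T.dist r v ≤ T.dist r m := by
            unfold IsAncestor at h1; omega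
          exact absurd (anc_compare hT h1 hma hle) hDm

end Helpers

/-- Let `(T,r)` be a spanning tree of `G` and `{x,y}` an edge of `G` whose endpoints are
incomparable in `(T,r)`. Let `w` be the deepest common ancestor of `x` and `y` and `v` the
child of `w` that is an ancestor of `y`. Then removing the tree edge `{w,v}` and adding
`{x,y}` yields again a spanning tree of `G`. -/
theorem stmt10 {V : Type*} [Fintype V] (G T : SimpleGraph V) (r : V)
    (hTG : T ≤ G) (hT : T.IsTree)
    (x y : V) (hxy : G.Adj x y) (hcross : ¬ TreeComparable T r x y)
    (w : V) (hwx : IsAncestor T r w x) (hwy : IsAncestor T r w y)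
    (hwdeep : ∀ w' : V, IsAncestor T r w' x → IsAncestor T r w' y →
      T.dist r w' ≤ T.dist r w)
    (v : V) (hv : T.Adj w v) (hwv : IsAncestor T r w v) (hwvne : w ≠ v)
    (hvy : IsAncestor T r v y) :
    SimpleGraph.fromEdgeSet ((T.edgeSet \ {s(w, v)}) ∪ {s(x, y)}) ≤ G ∧
    (SimpleGraph.fromEdgeSet ((T.edgeSet \ {s(w, v)}) ∪ {s(x, y)})).IsTree := by
  classical
  have hc := hT.isConnected
  have hac := hT.IsAcyclic
  set E' : Set (Sym2 V) := (T.edgeSet \ {s(w, v)}) ∪ {s(x, y)} with hE'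
  set T' : SimpleGraph V := SimpleGraph.fromEdgeSet E' with hT'
  -- basic facts
  have hxny : x ≠ y := by
    intro h
    subst h
    exact hcross (Or.inl (by unfold IsAncestor; simp [SimpleGraph.dist_self]))
  have hnTxy : ¬ T.Adj x y := by
    intro h
    rcases adj_parent hT (r := r) h with ⟨h1, -⟩ | ⟨h1, -⟩
    · exact hcross (Or.inl h1)
    · exact hcross (Or.inr h1)
  have hdwv : T.dist w v = 1 := SimpleGraph.dist_eq_one_iff_adj.mpr hv
  have hrv : T.dist r w + 1 = T.dist r v := by
    unfold IsAncestor at hwv; omega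
  have hxnD : ¬ IsAncestor T r v x := by
    intro h
    have := hwdeep v h hvy
    omega
  have hxyne_wv : s(x, y) ≠ s(w, v) := by
    intro h
    rw [Sym2.eq_iff] at h
    rcases h with ⟨h1, h2⟩ | ⟨h1, h2⟩ <;> subst h1 <;> subst h2
    · exact hnTxy hv
    · exact hnTxy hv.symm
  -- edges of T'
  have hT'adj : ∀ a b : V, T'.Adj a b ↔ (s(a, b) ∈ E' ∧ a ≠ b) := by
    intro a b; rw [hT', SimpleGraph.fromEdgeSet_adj]
  have hT'xy : T'.Adj x y := (hT'adj x y).mpr ⟨Or.inr rfl, hxny⟩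
  have hTsub : ∀ a b : V, T.Adj a b → s(a, b) ≠ s(w, v) → T'.Adj a b := by
    intro a b h hne
    exact (hT'adj a b).mpr ⟨Or.inl ⟨h, hne⟩, h.ne⟩
  have hT'edge_mem : ∀ e : Sym2 V, e ∈ T.edgeSet → e ≠ s(w, v) → e ∈ T'.edgeSet := by
    intro e he hne
    rw [hT', SimpleGraph.edgeSet_fromEdgeSet]
    exact ⟨Or.inl ⟨he, hne⟩, T.not_isDiag_of_mem_edgeSet he⟩
  have hT'edge_sub : ∀ e : Sym2 V, e ∈ T'.edgeSet → e ≠ s(x, y) →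
      e ∈ T.edgeSet ∧ e ≠ s(w, v) := by
    intro e he hne
    rw [hT', SimpleGraph.edgeSet_fromEdgeSet] at he
    rcases he.1 with h | h
    · exact ⟨h.1, h.2⟩
    · exact absurd h hne
  -- Part 1: T' ≤ G
  have hle : T' ≤ G := by
    intro a b hab
    rcases ((hT'adj a b).mp hab).1 with h | h
    · exact hTG h.1
    · rw [Set.mem_singleton_iff, Sym2.eq_iff] at h
      rcases h with ⟨h1, h2⟩ | ⟨h1, h2⟩ <;> subst h1 <;> subst h2
      · exact hxy
      · exact hxy.symm
  -- transfer walks avoiding {w,v} into T'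
  have htrans : ∀ {a b : V} (p : T.Walk a b), s(w, v) ∉ p.edges → T'.Reachable a b := by
    intro a b p hp
    refine ⟨p.transfer T' ?_⟩
    intro e he
    exact hT'edge_mem e (p.edges_subset_edgeSet he) (fun h => hp (h ▸ he))
  -- reachability of non-descendants of v from r
  have reach1 : ∀ u : V, ¬ IsAncestor T r v u → T'.Reachable r u := by
    intro u hu
    obtain ⟨p, hlen⟩ := hc.exists_walk_length_eq_dist r u
    by_cases hvmem : v ∈ p.support
    · exact absurd (dist_split p hlen hvmem).1 hu
    · refine htrans p (fun hmem => hvmem ?_)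
      exact p.snd_mem_support_of_mem_edges hmem
  -- reachability of descendants of v from v
  have reach2 : ∀ u : V, IsAncestor T r v u → T'.Reachable v u := by
    intro u hu
    obtain ⟨p, hlen⟩ := hc.exists_walk_length_eq_dist v u
    by_cases hwmem : w ∈ p.support
    · exfalso
      have hs := (dist_split p hlen hwmem).1
      have ht : T.dist r u ≤ T.dist r w + T.dist w u := hc.dist_triangle
      have hvw : T.dist v w = 1 := by rw [SimpleGraph.dist_comm]; exact hdwv
      unfold IsAncestor at hu
      omega
    · refine htrans p (fun hmem => hwmem ?_)
      exact p.fst_mem_support_of_mem_edges hmem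
  have reachr : ∀ u : V, T'.Reachable r u := by
    intro u
    by_cases hDu : IsAncestor T r v u
    · have h1 : T'.Reachable r x := reach1 x hxnD
      have h2 : T'.Reachable v y := reach2 y hvy
      have h3 : T'.Reachable v u := reach2 u hDu
      exact h1.trans (hT'xy.reachable.trans (h2.symm.trans h3))
    · exact reach1 u hDu
  have hT'conn : T'.Connected := by
    rw [SimpleGraph.connected_iff]
    exact ⟨fun a b => (reachr a).symm.trans (reachr b), ⟨r⟩⟩
  -- Part 3: acyclicity via the bridge {x,y}
  have hbridge : T'.IsBridge s(x, y) := by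
    rw [SimpleGraph.isBridge_iff]
    intro hreach
    rw [SimpleGraph.reachable_delete_edges_iff_exists_walk] at hreach
    obtain ⟨p, hpe⟩ := hreach
    have hsub : ∀ e ∈ p.edges, e ∈ T.edgeSet := by
      intro e he
      exact (hT'edge_sub e (p.edges_subset_edgeSet he) (fun h => hpe (h ▸ he))).1
    have hq : s(w, v) ∉ (p.transfer T hsub).edges := by
      rw [SimpleGraph.Walk.edges_transfer]
      intro hmem
      exact (hT'edge_sub _ (p.edges_subset_edgeSet hmem)
        (fun h => hpe (h ▸ hmem))).2 rfl
    have := boundary hT hv hwv hrv (p.transfer T hsub).reverse hvy hxnD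
    rw [SimpleGraph.Walk.edges_reverse, List.mem_reverse] at this
    exact hq this
  have hT'acyc : T'.IsAcyclic := by
    intro a c hcyc
    by_cases hmem : s(x, y) ∈ c.edges
    · exact (SimpleGraph.isBridge_iff_adj_and_forall_cycle_notMem hT'xy).mp hbridge
        c hcyc hmem
    · have hsub : ∀ e ∈ c.edges, e ∈ T.edgeSet := by
        intro e he
        exact (hT'edge_sub e (c.edges_subset_edgeSet he) (fun h => hmem (h ▸ he))).1
      exact hac (c.transfer T hsub) (hcyc.transfer hsub)
  exact ⟨hle, ⟨hT'conn, hT'acyc⟩⟩
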